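/- arXiv:2201.12797 — 2 statements merged into one kernel-verified Lean document; each statement's English description precedes it below -/
import Mathlib

section
/- Let (λ_i)_{i≥1} be a sequence of positive reals, α ∈ (0,1], and suppose ∑_{i=1}^∞ e^{-2λ_i u} ≤ e^{-λ_1 u} γ(u) for all u > 0, where γ : (0,∞) → (0,∞) is decreasing with γ(u) < ∞ for u > 0. Then there exists a constant c > 0 such that for all ε ∈ (0,1], ∑_{i=1}^∞ λ_i^{-(1+α)} e^{-2λ_i ε} ≤ c (1 + ∫_ε^1 γ(u) u^α du). -/
open MeasureTheory Real Set

/-- Integrability of `t^a * exp(-(r*t))` on `(0,∞)`. -/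
lemma integrableOn_rpow_mul_exp_neg_mul {a r : ℝ} (ha : 0 < a) (hr : 0 < r) :
    IntegrableOn (fun t : ℝ => t ^ a * Real.exp (-(r * t))) (Set.Ioi 0) := by
  have h0 : IntegrableOn (fun x : ℝ => Real.exp (-x) * x ^ ((a + 1) - 1)) (Set.Ioi 0) :=
    Real.GammaIntegral_convergent (by linarith)
  have h1 : IntegrableOn (fun x : ℝ =>
      Real.exp (-(r * x)) * (r * x) ^ ((a + 1) - 1)) (Set.Ioi 0) := by
    have := (integrableOn_Ioi_comp_mul_left_iff
      (fun x : ℝ => Real.exp (-x) * x ^ ((a + 1) - 1)) 0 hr).mpr (by simpa using h0)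
    simpa using this
  have h2 := h1.const_mul ((r : ℝ) ^ a)⁻¹
  refine IntegrableOn.congr_fun h2 (fun x hx => ?_) measurableSet_Ioi
  have hx0 : (0 : ℝ) < x := hx
  have hra : (0 : ℝ) < r ^ a := Real.rpow_pos_of_pos hr a
  rw [add_sub_cancel_right, Real.mul_rpow hr.le hx0.le]
  field_simp

/-- Key pointwise inequality: `λ^(1+α) ≤ (1 + 27/(2t)^3) * exp(2λt)`. -/
lemma rpow_le_const_mul_exp {lam t α : ℝ} (hlam : 0 < lam) (ht : 0 < t)
    (hα0 : 0 < α) (hα1 : α ≤ 1) :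
    lam ^ (1 + α) ≤ (1 + 27 / (2 * t) ^ 3) * Real.exp (2 * lam * t) := by
  have hC0 : (0 : ℝ) ≤ 27 / (2 * t) ^ 3 := by positivity
  have hexp1 : (1 : ℝ) ≤ Real.exp (2 * lam * t) := by
    have := Real.add_one_le_exp (2 * lam * t)
    nlinarith
  rcases le_or_gt lam 1 with h | h
  · have h1 : lam ^ (1 + α) ≤ 1 := Real.rpow_le_one hlam.le h (by linarith)
    nlinarith
  · have h3 : lam ^ (1 + α) ≤ lam ^ (3 : ℝ) :=
      Real.rpow_le_rpow_of_exponent_le h.le (by linarith)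
    have h3' : lam ^ (3 : ℝ) = lam ^ (3 : ℕ) := by
      rw [← Real.rpow_natCast lam 3]; norm_num
    have hy0 : (0 : ℝ) ≤ 2 * lam * t / 3 := by positivity
    have hy1 : 2 * lam * t / 3 ≤ Real.exp (2 * lam * t / 3) := by
      have := Real.add_one_le_exp (2 * lam * t / 3); linarith
    have hexp : (2 * lam * t / 3) ^ 3 ≤ Real.exp (2 * lam * t) := by
      calc (2 * lam * t / 3) ^ 3 ≤ (Real.exp (2 * lam * t / 3)) ^ 3 :=
            pow_le_pow_left₀ hy0 hy1 3
        _ = Real.exp ((3 : ℕ) * (2 * lam * t / 3)) := by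
            rw [Real.exp_nat_mul]
        _ = Real.exp (2 * lam * t) := by congr 1; push_cast; ring
    have h2t : (0 : ℝ) < (2 * t) ^ 3 := by positivity
    have key : lam ^ (3 : ℕ) ≤ 27 / (2 * t) ^ 3 * Real.exp (2 * lam * t) := by
      rw [div_mul_eq_mul_div, le_div_iff₀ h2t]
      calc lam ^ (3 : ℕ) * (2 * t) ^ 3 = 27 * (2 * lam * t / 3) ^ 3 := by ring
        _ ≤ 27 * Real.exp (2 * lam * t) := by nlinarith
    have hfin := h3.trans (h3'.le.trans key)
    rw [add_mul, one_mul]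
    linarith only [hfin, hexp1]

set_option maxHeartbeats 1000000 in
/-- Key spectral summation estimate: if `∑_i e^{-2λ_i u} ≤ e^{-λ₁ u} γ(u)` for a
decreasing positive `γ`, then for some `c > 0` and all `ε ∈ (0,1]`,
`∑_i λ_i^{-(1+α)} e^{-2λ_i ε} ≤ c (1 + ∫_ε^1 γ(u) u^α du)`. -/
theorem spectral_sum_estimate (lam : ℕ → ℝ) (hlam : ∀ i, 0 < lam i)
    (α : ℝ) (hα : α ∈ Set.Ioc (0 : ℝ) 1)
    (γ : ℝ → ℝ) (hγpos : ∀ u : ℝ, 0 < u → 0 < γ u)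
    (hγanti : AntitoneOn γ (Set.Ioi 0))
    (hbound : ∀ u : ℝ, 0 < u →
      ∑' i, Real.exp (-2 * lam i * u) ≤ Real.exp (-lam 0 * u) * γ u) :
    ∃ c : ℝ, 0 < c ∧ ∀ ε : ℝ, ε ∈ Set.Ioc (0 : ℝ) 1 →
      ∑' i, (lam i) ^ (-(1 + α)) * Real.exp (-2 * lam i * ε)
        ≤ c * (1 + ∫ u in ε..1, γ u * u ^ α) := by
  obtain ⟨hα0, hα1⟩ := hα
  have hΓ : 0 < Real.Gamma (1 + α) := Real.Gamma_pos_of_pos (by linarith)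
  set A : ℝ := 2 ^ (1 + α) / Real.Gamma (1 + α) with hA
  have hA0 : 0 < A := div_pos (Real.rpow_pos_of_pos two_pos _) hΓ
  have hlam0 : 0 < lam 0 := hlam 0
  -- tail integrability and constant
  have hKint : IntegrableOn (fun t : ℝ => (t + 1) * Real.exp (-(lam 0 * t))) (Ioi 0) := by
    have h1 : IntegrableOn (fun t : ℝ => t ^ (1 : ℝ) * Real.exp (-(lam 0 * t))) (Ioi 0) :=
      integrableOn_rpow_mul_exp_neg_mul one_pos hlam0
    have h2 : IntegrableOn (fun t : ℝ => Real.exp (-lam 0 * t)) (Ioi 0) :=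
      exp_neg_integrableOn_Ioi 0 hlam0
    have := h1.add h2
    refine IntegrableOn.congr_fun this (fun t _ => ?_) measurableSet_Ioi
    simp only [Real.rpow_one, Pi.add_apply, neg_mul]
    ring
  set K : ℝ := ∫ t in Ioi 0, (t + 1) * Real.exp (-(lam 0 * t)) with hK
  have hK0 : 0 ≤ K := setIntegral_nonneg measurableSet_Ioi
    (fun t ht => mul_nonneg (by linarith [le_of_lt (mem_Ioi.mp ht)]) (Real.exp_pos _).le)
  have hγ1 : 0 < γ 1 := hγpos 1 one_pos
  set B : ℝ := A * (γ 1 * K) with hB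
  have hB0 : 0 ≤ B := mul_nonneg hA0.le (mul_nonneg hγ1.le hK0)
  refine ⟨max A B, lt_of_lt_of_le hA0 (le_max_left _ _), ?_⟩
  intro ε hε
  obtain ⟨hε0, hε1⟩ := hε
  set I : ℝ := ∫ u in ε..1, γ u * u ^ α with hI
  have hI0 : 0 ≤ I := intervalIntegral.integral_nonneg hε1
    (fun u hu => mul_nonneg (hγpos u (lt_of_lt_of_le hε0 hu.1)).le
      (Real.rpow_nonneg (hε0.le.trans hu.1) _))
  have hRHS0 : 0 ≤ max A B * (1 + I) :=
    mul_nonneg (le_trans hA0.le (le_max_left _ _)) (by linarith)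
  by_cases hsum : Summable (fun i => lam i ^ (-(1 + α)) * Real.exp (-2 * lam i * ε))
  swap
  · rw [tsum_eq_zero_of_not_summable hsum]; exact hRHS0
  -- Main case.
  -- Per-index Gamma-integral identity
  have key_id : ∀ i, lam i ^ (-(1 + α)) * Real.exp (-2 * lam i * ε)
      = A * ∫ t in Ioi 0, t ^ α * Real.exp (-2 * lam i * (t + ε)) := by
    intro i
    have hli := hlam i
    have h2l : (0 : ℝ) < 2 * lam i := by linarith
    have hcong : ∀ t ∈ Ioi (0 : ℝ), t ^ α * Real.exp (-2 * lam i * (t + ε))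
        = (t ^ ((1 + α) - 1) * Real.exp (-(2 * lam i * t))) * Real.exp (-2 * lam i * ε) := by
      intro t _
      have harg : -2 * lam i * (t + ε) = -(2 * lam i * t) + -2 * lam i * ε := by ring
      rw [add_sub_cancel_left, harg, Real.exp_add]
      ring
    rw [setIntegral_congr_fun measurableSet_Ioi hcong, integral_mul_const,
      Real.integral_rpow_mul_exp_neg_mul_Ioi (by linarith : (0 : ℝ) < 1 + α) h2l]
    have e1 : (1 / (2 * lam i)) ^ (1 + α) = ((2 * lam i) ^ (1 + α))⁻¹ := by
      rw [one_div, Real.inv_rpow h2l.le]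
    have e2 : (2 * lam i) ^ (1 + α) = 2 ^ (1 + α) * lam i ^ (1 + α) :=
      Real.mul_rpow (by norm_num) hli.le
    have e3 : lam i ^ (-(1 + α)) = (lam i ^ (1 + α))⁻¹ := Real.rpow_neg hli.le _
    have hp2 : (0 : ℝ) < (2 : ℝ) ^ (1 + α) := Real.rpow_pos_of_pos two_pos _
    have hpl : (0 : ℝ) < lam i ^ (1 + α) := Real.rpow_pos_of_pos hli _
    rw [e1, e2, e3, hA]
    field_simp
  -- integrability per index
  have int_i : ∀ i, IntegrableOn
      (fun t : ℝ => t ^ α * Real.exp (-2 * lam i * (t + ε))) (Ioi 0) := by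
    intro i
    have h2l : (0 : ℝ) < 2 * lam i := by linarith [hlam i]
    have := (integrableOn_rpow_mul_exp_neg_mul hα0 h2l).mul_const
      (Real.exp (-2 * lam i * ε))
    refine IntegrableOn.congr_fun this (fun t _ => ?_) measurableSet_Ioi
    rw [mul_assoc, ← Real.exp_add]
    congr 2
    ring
  have nonneg_i : ∀ i, 0 ≤ᵐ[volume.restrict (Ioi (0:ℝ))]
      fun t : ℝ => t ^ α * Real.exp (-2 * lam i * (t + ε)) := by
    intro i
    filter_upwards [self_mem_ae_restrict (measurableSet_Ioi : MeasurableSet (Ioi (0:ℝ)))]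
      with t ht
    exact mul_nonneg (Real.rpow_nonneg (le_of_lt ht) _) (Real.exp_pos _).le
  have hfE : ∀ i, ENNReal.ofReal (lam i ^ (-(1 + α)) * Real.exp (-2 * lam i * ε))
      = ENNReal.ofReal A
        * ∫⁻ t in Ioi 0, ENNReal.ofReal (t ^ α * Real.exp (-2 * lam i * (t + ε))) := by
    intro i
    rw [key_id i, ENNReal.ofReal_mul hA0.le,
      ofReal_integral_eq_lintegral_ofReal (int_i i) (nonneg_i i)]
  -- measurability for tsum-lintegral swap
  have hmeas : ∀ i, AEMeasurable
      (fun t : ℝ => ENNReal.ofReal (t ^ α * Real.exp (-2 * lam i * (t + ε))))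
      (volume.restrict (Ioi (0:ℝ))) := by
    intro i
    have hc : Continuous fun t : ℝ => t ^ α * Real.exp (-2 * lam i * (t + ε)) :=
      (Real.continuous_rpow_const hα0.le).mul (Real.continuous_exp.comp (by continuity))
    exact hc.measurable.ennreal_ofReal.aemeasurable
  -- pointwise sum bound
  have hpt : ∀ t ∈ Ioi (0 : ℝ),
      (∑' i, ENNReal.ofReal (t ^ α * Real.exp (-2 * lam i * (t + ε))))
        ≤ ENNReal.ofReal (t ^ α * (Real.exp (-lam 0 * (t + ε)) * γ (t + ε))) := by
    intro t ht
    have ht0 : (0 : ℝ) < t := ht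
    have hu : (0 : ℝ) < t + ε := by linarith
    set C : ℝ := 1 + 27 / (2 * t) ^ 3 with hC
    have hC0 : (0 : ℝ) ≤ C := by positivity
    have hCle : ∀ i, Real.exp (-2 * lam i * (t + ε))
        ≤ C * (lam i ^ (-(1 + α)) * Real.exp (-2 * lam i * ε)) := by
      intro i
      have hli := hlam i
      have hpl : (0 : ℝ) < lam i ^ (1 + α) := Real.rpow_pos_of_pos hli _
      have hmain : lam i ^ (1 + α) ≤ C * Real.exp (2 * lam i * t) :=
        rpow_le_const_mul_exp hli ht0 hα0 hα1
      have h2 : lam i ^ (1 + α) * Real.exp (-2 * lam i * (t + ε))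
          ≤ C * Real.exp (-2 * lam i * ε) := by
        have e1 : Real.exp (-2 * lam i * (t + ε))
            = Real.exp (-(2 * lam i * t)) * Real.exp (-2 * lam i * ε) := by
          rw [← Real.exp_add]; congr 1; ring
        rw [e1, ← mul_assoc]
        refine mul_le_mul_of_nonneg_right ?_ (Real.exp_pos _).le
        rw [Real.exp_neg, mul_inv_le_iff₀' (Real.exp_pos _)]
        calc lam i ^ (1 + α) ≤ C * Real.exp (2 * lam i * t) := hmain
          _ = Real.exp (2 * lam i * t) * C := by ring
      rw [Real.rpow_neg hli.le]
      calc Real.exp (-2 * lam i * (t + ε))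
          = (lam i ^ (1 + α))⁻¹ * (lam i ^ (1 + α) * Real.exp (-2 * lam i * (t + ε))) := by
            field_simp
        _ ≤ (lam i ^ (1 + α))⁻¹ * (C * Real.exp (-2 * lam i * ε)) :=
            mul_le_mul_of_nonneg_left h2 (inv_nonneg.2 hpl.le)
        _ = C * ((lam i ^ (1 + α))⁻¹ * Real.exp (-2 * lam i * ε)) := by ring
    have hS : Summable (fun i => Real.exp (-2 * lam i * (t + ε))) :=
      Summable.of_nonneg_of_le (fun i => (Real.exp_pos _).le) hCle (hsum.mul_left C)
    calc (∑' i, ENNReal.ofReal (t ^ α * Real.exp (-2 * lam i * (t + ε))))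
        = ∑' i, ENNReal.ofReal (t ^ α) * ENNReal.ofReal (Real.exp (-2 * lam i * (t + ε))) := by
          simp_rw [ENNReal.ofReal_mul (Real.rpow_nonneg ht0.le α)]
      _ = ENNReal.ofReal (t ^ α)
            * ENNReal.ofReal (∑' i, Real.exp (-2 * lam i * (t + ε))) := by
          rw [ENNReal.tsum_mul_left,
            ENNReal.ofReal_tsum_of_nonneg (fun i => (Real.exp_pos _).le) hS]
      _ ≤ ENNReal.ofReal (t ^ α)
            * ENNReal.ofReal (Real.exp (-lam 0 * (t + ε)) * γ (t + ε)) :=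
          mul_le_mul_right (ENNReal.ofReal_le_ofReal (hbound _ hu)) _
      _ = ENNReal.ofReal (t ^ α * (Real.exp (-lam 0 * (t + ε)) * γ (t + ε))) :=
          (ENNReal.ofReal_mul (Real.rpow_nonneg ht0.le α)).symm
  -- Part 1 : integral over Ioc 0 (1-ε)
  have hpart1 : (∫⁻ t in Ioc 0 (1 - ε),
      ENNReal.ofReal (t ^ α * (Real.exp (-lam 0 * (t + ε)) * γ (t + ε))))
        ≤ ENNReal.ofReal I := by
    have step1 : ∀ t ∈ Ioc (0:ℝ) (1 - ε),
        t ^ α * (Real.exp (-lam 0 * (t + ε)) * γ (t + ε)) ≤ γ (t + ε) * (t + ε) ^ α := by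
      intro t ht
      obtain ⟨ht0, ht1⟩ := ht
      have hu0 : (0 : ℝ) < t + ε := by linarith
      have hγu : 0 < γ (t + ε) := hγpos _ hu0
      have h1 : t ^ α ≤ (t + ε) ^ α := Real.rpow_le_rpow ht0.le (by linarith) hα0.le
      have h2 : Real.exp (-lam 0 * (t + ε)) ≤ 1 :=
        Real.exp_le_one_iff.mpr (by nlinarith)
      have h3 : (0:ℝ) ≤ t ^ α := Real.rpow_nonneg ht0.le α
      have h4 : (0:ℝ) ≤ Real.exp (-lam 0 * (t + ε)) := (Real.exp_pos _).le
      calc t ^ α * (Real.exp (-lam 0 * (t + ε)) * γ (t + ε))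
          ≤ t ^ α * (1 * γ (t + ε)) := by
            refine mul_le_mul_of_nonneg_left ?_ h3
            exact mul_le_mul_of_nonneg_right h2 hγu.le
        _ = t ^ α * γ (t + ε) := by ring
        _ ≤ (t + ε) ^ α * γ (t + ε) := mul_le_mul_of_nonneg_right h1 hγu.le
        _ = γ (t + ε) * (t + ε) ^ α := by ring
    have hint : IntegrableOn (fun u : ℝ => γ u * u ^ α) (Ioc ε 1) := by
      constructor
      · exact ((aemeasurable_restrict_of_antitoneOn measurableSet_Ioc
          (hγanti.mono (fun x hx => lt_of_lt_of_le hε0 hx.1.le))).mul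
          ((Real.continuous_rpow_const hα0.le).measurable.aemeasurable)).aestronglyMeasurable
      · refine HasFiniteIntegral.restrict_of_bounded (C := γ ε)
          (measure_Ioc_lt_top) ?_
        filter_upwards [self_mem_ae_restrict
          (measurableSet_Ioc : MeasurableSet (Ioc ε (1:ℝ)))] with u hu
        have hu0 : (0:ℝ) < u := lt_trans hε0 hu.1
        have hγu : 0 < γ u := hγpos _ hu0
        have hγε : γ u ≤ γ ε := hγanti (mem_Ioi.mpr hε0) (mem_Ioi.mpr hu0) hu.1.le
        have huα : u ^ α ≤ 1 := Real.rpow_le_one hu0.le hu.2 hα0.le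
        have huα0 : (0:ℝ) ≤ u ^ α := Real.rpow_nonneg hu0.le α
        rw [Real.norm_eq_abs, abs_of_nonneg (mul_nonneg hγu.le huα0)]
        nlinarith
    have hnn : 0 ≤ᵐ[volume.restrict (Ioc ε (1:ℝ))] fun u : ℝ => γ u * u ^ α := by
      filter_upwards [self_mem_ae_restrict
        (measurableSet_Ioc : MeasurableSet (Ioc ε (1:ℝ)))] with u hu
      exact mul_nonneg (hγpos _ (lt_trans hε0 hu.1)).le
        (Real.rpow_nonneg (lt_trans hε0 hu.1).le α)
    calc (∫⁻ t in Ioc 0 (1 - ε),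
        ENNReal.ofReal (t ^ α * (Real.exp (-lam 0 * (t + ε)) * γ (t + ε))))
        ≤ ∫⁻ t in Ioc 0 (1 - ε), ENNReal.ofReal (γ (t + ε) * (t + ε) ^ α) := by
          refine lintegral_mono_ae ?_
          filter_upwards [self_mem_ae_restrict
            (measurableSet_Ioc : MeasurableSet (Ioc (0:ℝ) (1 - ε)))] with t ht
          exact ENNReal.ofReal_le_ofReal (step1 t ht)
      _ = ∫⁻ u in Ioc ε 1, ENNReal.ofReal (γ u * u ^ α) := by
          rw [← lintegral_indicator (measurableSet_Ioc : MeasurableSet (Ioc (0:ℝ) (1 - ε))),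
            ← lintegral_indicator (measurableSet_Ioc : MeasurableSet (Ioc ε (1:ℝ)))]
          rw [show (fun t => (Ioc (0:ℝ) (1 - ε)).indicator
              (fun t => ENNReal.ofReal (γ (t + ε) * (t + ε) ^ α)) t)
              = fun t => (Ioc ε (1:ℝ)).indicator
                (fun u => ENNReal.ofReal (γ u * u ^ α)) (t + ε) from ?_]
          · exact lintegral_add_right_eq_self
              (fun u => (Ioc ε (1:ℝ)).indicator (fun u => ENNReal.ofReal (γ u * u ^ α)) u) ε
          · funext t
            by_cases h : t ∈ Ioc (0:ℝ) (1 - ε)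
            · have h' : t + ε ∈ Ioc ε (1:ℝ) := ⟨by linarith [h.1], by linarith [h.2]⟩
              rw [indicator_of_mem h, indicator_of_mem h']
            · have h' : t + ε ∉ Ioc ε (1:ℝ) := by
                intro hmem
                exact h ⟨by linarith [hmem.1], by linarith [hmem.2]⟩
              rw [indicator_of_notMem h, indicator_of_notMem h']
      _ = ENNReal.ofReal (∫ u in Ioc ε 1, γ u * u ^ α) :=
          (ofReal_integral_eq_lintegral_ofReal hint hnn).symm
      _ = ENNReal.ofReal I := by rw [hI, intervalIntegral.integral_of_le hε1]
  -- Part 2 : tail over Ioi (1-ε)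
  have hpart2 : (∫⁻ t in Ioi (1 - ε),
      ENNReal.ofReal (t ^ α * (Real.exp (-lam 0 * (t + ε)) * γ (t + ε))))
        ≤ ENNReal.ofReal (γ 1 * K) := by
    have step2 : ∀ t ∈ Ioi (1 - ε),
        t ^ α * (Real.exp (-lam 0 * (t + ε)) * γ (t + ε))
          ≤ γ 1 * ((t + 1) * Real.exp (-(lam 0 * t))) := by
      intro t ht
      have ht' : 1 - ε < t := ht
      have ht0 : (0:ℝ) ≤ t := by linarith
      have hu1 : (1:ℝ) ≤ t + ε := by linarith
      have hu0 : (0:ℝ) < t + ε := by linarith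
      have hγle : γ (t + ε) ≤ γ 1 := hγanti (mem_Ioi.mpr one_pos) (mem_Ioi.mpr hu0) hu1
      have hγu : 0 ≤ γ (t + ε) := (hγpos _ hu0).le
      have hta : t ^ α ≤ t + 1 := by
        calc t ^ α ≤ (t + ε) ^ α := Real.rpow_le_rpow ht0 (by linarith) hα0.le
          _ ≤ (t + ε) ^ (1:ℝ) := Real.rpow_le_rpow_of_exponent_le hu1 hα1
          _ = t + ε := Real.rpow_one _
          _ ≤ t + 1 := by linarith
      have hexp : Real.exp (-lam 0 * (t + ε)) ≤ Real.exp (-(lam 0 * t)) :=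
        Real.exp_le_exp.mpr (by nlinarith)
      calc t ^ α * (Real.exp (-lam 0 * (t + ε)) * γ (t + ε))
          ≤ (t + 1) * (Real.exp (-(lam 0 * t)) * γ 1) := by
            refine mul_le_mul hta ?_ (mul_nonneg (Real.exp_pos _).le hγu) (by linarith)
            exact mul_le_mul hexp hγle hγu (Real.exp_pos _).le
        _ = γ 1 * ((t + 1) * Real.exp (-(lam 0 * t))) := by ring
    have hnn2 : 0 ≤ᵐ[volume.restrict (Ioi (0:ℝ))]
        fun t : ℝ => γ 1 * ((t + 1) * Real.exp (-(lam 0 * t))) := by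
      filter_upwards [self_mem_ae_restrict
        (measurableSet_Ioi : MeasurableSet (Ioi (0:ℝ)))] with t ht
      have ht0 : (0:ℝ) < t := ht
      exact mul_nonneg hγ1.le (mul_nonneg (by linarith) (Real.exp_pos _).le)
    calc (∫⁻ t in Ioi (1 - ε),
        ENNReal.ofReal (t ^ α * (Real.exp (-lam 0 * (t + ε)) * γ (t + ε))))
        ≤ ∫⁻ t in Ioi (1 - ε),
            ENNReal.ofReal (γ 1 * ((t + 1) * Real.exp (-(lam 0 * t)))) := by
          refine lintegral_mono_ae ?_
          filter_upwards [self_mem_ae_restrict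
            (measurableSet_Ioi : MeasurableSet (Ioi (1 - ε)))] with t ht
          exact ENNReal.ofReal_le_ofReal (step2 t ht)
      _ ≤ ∫⁻ t in Ioi 0,
            ENNReal.ofReal (γ 1 * ((t + 1) * Real.exp (-(lam 0 * t)))) :=
          lintegral_mono_set (fun x hx => lt_of_le_of_lt (by linarith) (mem_Ioi.mp hx))
      _ = ENNReal.ofReal (∫ t in Ioi 0, γ 1 * ((t + 1) * Real.exp (-(lam 0 * t)))) :=
          (ofReal_integral_eq_lintegral_ofReal (hKint.const_mul (γ 1)) hnn2).symm
      _ = ENNReal.ofReal (γ 1 * K) := by rw [integral_const_mul]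
  -- Assemble
  have main : (∑' i, ENNReal.ofReal (lam i ^ (-(1 + α)) * Real.exp (-2 * lam i * ε)))
      ≤ ENNReal.ofReal (max A B * (1 + I)) := by
    calc (∑' i, ENNReal.ofReal (lam i ^ (-(1 + α)) * Real.exp (-2 * lam i * ε)))
        = ENNReal.ofReal A * ∑' i, ∫⁻ t in Ioi 0,
            ENNReal.ofReal (t ^ α * Real.exp (-2 * lam i * (t + ε))) := by
          simp_rw [hfE]; rw [ENNReal.tsum_mul_left]
      _ = ENNReal.ofReal A * ∫⁻ t in Ioi 0,
            ∑' i, ENNReal.ofReal (t ^ α * Real.exp (-2 * lam i * (t + ε))) := by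
          rw [lintegral_tsum hmeas]
      _ ≤ ENNReal.ofReal A * ∫⁻ t in Ioi 0,
            ENNReal.ofReal (t ^ α * (Real.exp (-lam 0 * (t + ε)) * γ (t + ε))) := by
          refine mul_le_mul_right (lintegral_mono_ae ?_) _
          filter_upwards [self_mem_ae_restrict
            (measurableSet_Ioi : MeasurableSet (Ioi (0:ℝ)))] with t ht
          exact hpt t ht
      _ = ENNReal.ofReal A * ((∫⁻ t in Ioc 0 (1 - ε),
              ENNReal.ofReal (t ^ α * (Real.exp (-lam 0 * (t + ε)) * γ (t + ε))))
            + ∫⁻ t in Ioi (1 - ε),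
              ENNReal.ofReal (t ^ α * (Real.exp (-lam 0 * (t + ε)) * γ (t + ε)))) := by
          have hsplit : (∫⁻ t in Ioi (0:ℝ),
              ENNReal.ofReal (t ^ α * (Real.exp (-lam 0 * (t + ε)) * γ (t + ε))))
              = (∫⁻ t in Ioc 0 (1 - ε),
                  ENNReal.ofReal (t ^ α * (Real.exp (-lam 0 * (t + ε)) * γ (t + ε))))
                + ∫⁻ t in Ioi (1 - ε),
                  ENNReal.ofReal (t ^ α * (Real.exp (-lam 0 * (t + ε)) * γ (t + ε))) := by
            rw [← lintegral_union measurableSet_Ioi Ioc_disjoint_Ioi_same,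
              Ioc_union_Ioi_eq_Ioi (by linarith : (0:ℝ) ≤ 1 - ε)]
          rw [hsplit]
      _ ≤ ENNReal.ofReal A * (ENNReal.ofReal I + ENNReal.ofReal (γ 1 * K)) :=
          mul_le_mul_right (add_le_add hpart1 hpart2) _
      _ = ENNReal.ofReal (A * (I + γ 1 * K)) := by
          rw [← ENNReal.ofReal_add hI0 (mul_nonneg hγ1.le hK0),
            ← ENNReal.ofReal_mul hA0.le]
      _ ≤ ENNReal.ofReal (max A B * (1 + I)) := by
          refine ENNReal.ofReal_le_ofReal ?_
          have h1 : A ≤ max A B := le_max_left _ _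
          have h2 : B ≤ max A B := le_max_right _ _
          have h3 : A * (I + γ 1 * K) = A * I + B := by rw [hB]; ring
          nlinarith [mul_le_mul_of_nonneg_right h1 hI0]
  have hofsum : ENNReal.ofReal (∑' i, lam i ^ (-(1 + α)) * Real.exp (-2 * lam i * ε))
      = ∑' i, ENNReal.ofReal (lam i ^ (-(1 + α)) * Real.exp (-2 * lam i * ε)) :=
    ENNReal.ofReal_tsum_of_nonneg
      (fun i => mul_nonneg (Real.rpow_nonneg (hlam i).le _) (Real.exp_pos _).le) hsum
  exact (ENNReal.ofReal_le_ofReal_iff hRHS0).mp (hofsum ▸ main)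
end

section
/- Let (P_t)_{t≥0} be a Markov semigroup on L²(μ) satisfying the Poincaré inequality ‖P_s f - μ(f)‖_{L²(μ)} ≤ e^{-λ₁ s}‖f - μ(f)‖_{L²(μ)}, and let (S_t^B) be an independent subordinator with Laplace exponent B. Then the subordinated semigroup P_t^B f = ∫_{[0,∞)} P_s f dP_{S_t^B}(s) satisfies ‖P_t^B f - μ(f)‖_{L²(μ)} ≤ e^{-tB(λ₁)} ‖f - μ(f)‖_{L²(μ)} for all t > 0 and f ∈ L²(μ). -/
open MeasureTheory Set

open scoped ENNReal

/-- Minkowski's integral inequality for `p = 2`, `ℝ≥0∞`-valued version. -/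
lemma minkowski_L2 {α β : Type*} [MeasurableSpace α] [MeasurableSpace β]
    (ν : Measure α) (μ : Measure β) [SFinite ν] [IsFiniteMeasure μ]
    {g : α × β → ℝ≥0∞} (hg : AEMeasurable g (ν.prod μ)) :
    (∫⁻ x, (∫⁻ s, g (s, x) ∂ν) ^ (2:ℝ) ∂μ) ^ (1/2 : ℝ)
      ≤ ∫⁻ s, (∫⁻ x, g (s, x) ^ (2:ℝ) ∂μ) ^ (1/2 : ℝ) ∂ν := by
  set Φ : β → ℝ≥0∞ := fun x => ∫⁻ s, g (s, x) ∂ν with hΦdef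
  have hswap : AEMeasurable (fun p : β × α => g (p.2, p.1)) (μ.prod ν) := by
    exact hg.prod_swap
  have hΦ : AEMeasurable Φ μ := by
    refine ⟨fun x => ∫⁻ s, hswap.mk _ (x, s) ∂ν,
      hswap.measurable_mk.lintegral_prod_right', ?_⟩
    filter_upwards [Measure.ae_ae_of_ae_prod hswap.ae_eq_mk] with x hx using
      lintegral_congr_ae hx
  have hfib : ∀ᵐ s ∂ν, AEMeasurable (fun x => g (s, x)) μ := by
    filter_upwards [Measure.ae_ae_of_ae_prod hg.ae_eq_mk] with s hs
    exact ⟨fun x => hg.mk g (s, x), hg.measurable_mk.comp measurable_prodMk_left, hs⟩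
  set R := ∫⁻ s, (∫⁻ x, g (s, x) ^ (2:ℝ) ∂μ) ^ (1/2 : ℝ) ∂ν with hR
  have key : ∀ n : ℕ, (∫⁻ x, min (Φ x) n ^ (2:ℝ) ∂μ) ^ (1/2:ℝ) ≤ R := by
    intro n
    set ψ : β → ℝ≥0∞ := fun x => min (Φ x) (n:ℝ≥0∞) with hψdef
    have hψ : AEMeasurable ψ μ := hΦ.min aemeasurable_const
    have hψle : ∀ x, ψ x ≤ (n:ℝ≥0∞) := fun x => min_le_right _ _
    have hψtop : ∀ x, ψ x ≠ ⊤ := fun x => ((hψle x).trans_lt (ENNReal.coe_lt_top)).ne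
    set E := ∫⁻ x, ψ x ^ (2:ℝ) ∂μ with hE
    have hEfin : E ≠ ⊤ := by
      refine ne_top_of_le_ne_top ?_ (lintegral_mono fun x =>
        ENNReal.rpow_le_rpow (hψle x) (by norm_num : (0:ℝ) ≤ 2))
      rw [lintegral_const]
      exact ENNReal.mul_ne_top (ENNReal.rpow_ne_top_of_nonneg (by norm_num)
        ENNReal.coe_ne_top) (measure_ne_top μ _)
    by_cases hE0 : E = 0
    · rw [hE0, ENNReal.zero_rpow_of_pos (by norm_num)]
      exact zero_le
    have hsq : ∀ a : ℝ≥0∞, a ^ (2:ℝ) = a * a := fun a => by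
      rw [show (2:ℝ) = ((2:ℕ):ℝ) by norm_num, ENNReal.rpow_natCast, sq]
    have step : E ≤ E ^ (1/2:ℝ) * R := by
      have h1 : E ≤ ∫⁻ x, ψ x * Φ x ∂μ := by
        refine lintegral_mono fun x => ?_
        rw [hsq]
        exact mul_le_mul_right (min_le_left _ _) _
      have h2 : ∫⁻ x, ψ x * Φ x ∂μ = ∫⁻ s, ∫⁻ x, ψ x * g (s, x) ∂μ ∂ν := by
        have heq : ∀ x, ψ x * Φ x = ∫⁻ s, ψ x * g (s, x) ∂ν := fun x =>
          (lintegral_const_mul' _ _ (hψtop x)).symm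
        simp_rw [heq]
        exact lintegral_lintegral_swap ((hψ.comp_fst.mul hswap) :)
      have h3 : ∀ᵐ s ∂ν, ∫⁻ x, ψ x * g (s, x) ∂μ
          ≤ E ^ (1/2:ℝ) * (∫⁻ x, g (s, x) ^ (2:ℝ) ∂μ) ^ (1/2:ℝ) := by
        filter_upwards [hfib] with s hgs
        have := ENNReal.lintegral_mul_le_Lp_mul_Lq μ
          (⟨by norm_num, by norm_num, by norm_num⟩ : (2:ℝ).HolderConjugate 2) hψ hgs
        simpa [hE] using this
      calc E ≤ ∫⁻ x, ψ x * Φ x ∂μ := h1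
        _ = ∫⁻ s, ∫⁻ x, ψ x * g (s, x) ∂μ ∂ν := h2
        _ ≤ ∫⁻ s, E ^ (1/2:ℝ) * (∫⁻ x, g (s, x) ^ (2:ℝ) ∂μ) ^ (1/2:ℝ) ∂ν :=
            lintegral_mono_ae h3
        _ = E ^ (1/2:ℝ) * R := lintegral_const_mul' _ _
            (ENNReal.rpow_ne_top_of_nonneg (by norm_num) hEfin)
    have hE12 : E ^ (1/2:ℝ) ≠ 0 := by
      simp [ENNReal.rpow_eq_zero_iff, hE0, hEfin]
    have hE12top : E ^ (1/2:ℝ) ≠ ⊤ := ENNReal.rpow_ne_top_of_nonneg (by norm_num) hEfin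
    have hEE : E ^ (1/2:ℝ) * E ^ (1/2:ℝ) = E := by
      rw [← ENNReal.rpow_add _ _ hE0 hEfin]; norm_num
    refine (ENNReal.mul_le_mul_iff_right hE12 hE12top).mp ?_
    rw [hEE]; exact step
  -- reduce to squared inequality and monotone convergence
  have hmain : ∫⁻ x, Φ x ^ (2:ℝ) ∂μ ≤ R ^ (2:ℝ) := by
    have hlim : ∫⁻ x, Φ x ^ (2:ℝ) ∂μ = ⨆ n : ℕ, ∫⁻ x, min (Φ x) n ^ (2:ℝ) ∂μ := by
      rw [← lintegral_iSup']
      · refine lintegral_congr fun x => ?_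
        have h1 : (⨆ n : ℕ, min (Φ x) (n:ℝ≥0∞)) = Φ x := by
          rw [← inf_iSup_eq (f := fun n : ℕ => (n:ℝ≥0∞))]
          simp [ENNReal.iSup_natCast, min_def]
        refine le_antisymm ?_ (iSup_le fun n =>
          ENNReal.rpow_le_rpow (min_le_left _ _) (by norm_num))
        rcases eq_top_or_lt_top (Φ x) with htop | hlt
        · have : ∀ n : ℕ, (n:ℝ≥0∞) ≤ min (Φ x) n ^ (2:ℝ) := by
            intro n
            rw [htop]
            simp only [min_eq_right le_top]
            rcases Nat.eq_zero_or_pos n with h0 | h1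
            · simp [h0]
            · calc (n:ℝ≥0∞) = (n:ℝ≥0∞) ^ (1:ℝ) := by rw [ENNReal.rpow_one]
                _ ≤ (n:ℝ≥0∞) ^ (2:ℝ) := ENNReal.rpow_le_rpow_of_exponent_le
                    (by exact_mod_cast h1) (by norm_num)
          calc Φ x ^ (2:ℝ) ≤ ⊤ := le_top
            _ = ⨆ n : ℕ, (n:ℝ≥0∞) := ENNReal.iSup_natCast.symm
            _ ≤ ⨆ n : ℕ, min (Φ x) n ^ (2:ℝ) := iSup_mono this
        · obtain ⟨n, hn⟩ := ENNReal.exists_nat_gt hlt.ne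
          calc Φ x ^ (2:ℝ) = min (Φ x) n ^ (2:ℝ) := by rw [min_eq_left hn.le]
            _ ≤ ⨆ m : ℕ, min (Φ x) m ^ (2:ℝ) := le_iSup (fun m : ℕ => min (Φ x) m ^ (2:ℝ)) n
      · exact fun n => (hΦ.min aemeasurable_const).pow_const _
      · refine ae_of_all _ fun x n m hnm => ?_
        exact ENNReal.rpow_le_rpow (min_le_min le_rfl (by exact_mod_cast hnm)) (by norm_num)
    rw [hlim]
    refine iSup_le fun n => ?_
    have := key n
    calc ∫⁻ x, min (Φ x) n ^ (2:ℝ) ∂μ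
        = ((∫⁻ x, min (Φ x) n ^ (2:ℝ) ∂μ) ^ (1/2:ℝ)) ^ (2:ℝ) := by
          rw [← ENNReal.rpow_mul]; norm_num
      _ ≤ R ^ (2:ℝ) := by gcongr
  calc (∫⁻ x, Φ x ^ (2:ℝ) ∂μ) ^ (1/2:ℝ) ≤ (R ^ (2:ℝ)) ^ (1/2:ℝ) := by gcongr
    _ = R := by rw [← ENNReal.rpow_mul]; norm_num

/-- If `(P_s)` satisfies the Poincaré inequality with rate `λ₁` and `(ν_t)` are
the laws of an independent subordinator with Laplace exponent `B`, then the
subordinated semigroup `P_t^B f = ∫ P_s f dν_t(s)` satisfies the Poincaré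
inequality with rate `B(λ₁)`:
`‖P_t^B f - μ(f)‖_{L²(μ)} ≤ e^{-tB(λ₁)} ‖f - μ(f)‖_{L²(μ)}`. -/
theorem subordinated_poincare
    {M : Type*} [MeasurableSpace M] (μ : Measure M) [IsProbabilityMeasure μ]
    (P : ℝ → (M → ℝ) → (M → ℝ)) (B : ℝ → ℝ) (ν : ℝ → Measure ℝ)
    (lam1 : ℝ) (hlam1 : 0 < lam1)
    (hν : ∀ t : ℝ, 0 ≤ t → IsProbabilityMeasure (ν t))
    (hsupp : ∀ t : ℝ, 0 ≤ t → (ν t) (Set.Iio 0) = 0)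
    (hlaplace : ∀ t l : ℝ, 0 ≤ t → 0 ≤ l →
      ∫ s, Real.exp (-l * s) ∂(ν t) = Real.exp (-t * B l))
    (hPoincare : ∀ s : ℝ, 0 ≤ s → ∀ f : M → ℝ, MemLp f 2 μ →
      eLpNorm (fun x => P s f x - ∫ y, f y ∂μ) 2 μ
        ≤ ENNReal.ofReal (Real.exp (-lam1 * s)) *
          eLpNorm (fun x => f x - ∫ y, f y ∂μ) 2 μ) :
    ∀ t : ℝ, 0 < t → ∀ f : M → ℝ, MemLp f 2 μ →
      AEStronglyMeasurable (fun q : ℝ × M => P q.1 f q.2) ((ν t).prod μ) →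
      Integrable (fun q : ℝ × M => P q.1 f q.2) ((ν t).prod μ) →
      eLpNorm (fun x => (∫ s, P s f x ∂(ν t)) - ∫ y, f y ∂μ) 2 μ
        ≤ ENNReal.ofReal (Real.exp (-t * B lam1)) *
          eLpNorm (fun x => f x - ∫ y, f y ∂μ) 2 μ := by
  intro t ht f hf hmeas hint
  haveI : IsProbabilityMeasure (ν t) := hν t ht.le
  set m : ℝ := ∫ y, f y ∂μ with hm
  set C : ℝ≥0∞ := eLpNorm (fun x => f x - m) 2 μ with hC
  have hCtop : C ≠ ⊤ := (hf.sub (memLp_const m)).2.ne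
  -- the ENNReal-valued kernel
  set g : ℝ × M → ℝ≥0∞ := fun q => (‖P q.1 f q.2 - m‖₊ : ℝ≥0∞) with hg
  have hgmeas : AEMeasurable g ((ν t).prod μ) :=
    (hmeas.sub aestronglyMeasurable_const).enorm
  have htwo : ((2:ℝ≥0∞)).toReal = 2 := by norm_num
  have heLp : ∀ h : M → ℝ, eLpNorm h 2 μ
      = (∫⁻ x, (‖h x‖₊ : ℝ≥0∞) ^ (2:ℝ) ∂μ) ^ (1/2:ℝ) := by
    intro h
    rw [eLpNorm_eq_lintegral_rpow_enorm_toReal (by norm_num) (by norm_num), htwo]; rfl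
  -- a.e. s is nonnegative
  have hae0 : ∀ᵐ s ∂(ν t), 0 ≤ s := by
    rw [ae_iff]
    convert hsupp t ht.le using 2
    ext s; simp [Set.mem_Iio, not_le]
  -- Step A : pointwise bound
  have stepA : eLpNorm (fun x => (∫ s, P s f x ∂(ν t)) - m) 2 μ
      ≤ (∫⁻ x, (∫⁻ s, g (s, x) ∂(ν t)) ^ (2:ℝ) ∂μ) ^ (1/2:ℝ) := by
    rw [heLp]
    refine ENNReal.rpow_le_rpow (lintegral_mono_ae ?_) (by norm_num)
    filter_upwards [hint.prod_left_ae] with x hx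
    refine ENNReal.rpow_le_rpow ?_ (by norm_num)
    have heq : (∫ s, P s f x ∂(ν t)) - m = ∫ s, (P s f x - m) ∂(ν t) := by
      rw [integral_sub hx (integrable_const m), integral_const, probReal_univ,
        one_smul]
    rw [heq]
    exact enorm_integral_le_lintegral_enorm _
  -- Step B : Minkowski
  have stepB := minkowski_L2 (ν t) μ hgmeas
  -- Step C : Poincaré bound on fibers
  have stepC : ∫⁻ s, (∫⁻ x, g (s, x) ^ (2:ℝ) ∂μ) ^ (1/2:ℝ) ∂(ν t)
      ≤ ∫⁻ s, ENNReal.ofReal (Real.exp (-lam1 * s)) * C ∂(ν t) := by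
    refine lintegral_mono_ae ?_
    filter_upwards [hae0] with s hs
    have := hPoincare s hs f hf
    rw [heLp] at this
    exact this
  -- Step D : Laplace transform
  have hintexp : Integrable (fun s => Real.exp (-lam1 * s)) (ν t) := by
    by_contra hcon
    have := hlaplace t lam1 ht.le hlam1.le
    rw [integral_undef hcon] at this
    exact (Real.exp_pos _).ne' this.symm
  have stepD : ∫⁻ s, ENNReal.ofReal (Real.exp (-lam1 * s)) * C ∂(ν t)
      = ENNReal.ofReal (Real.exp (-t * B lam1)) * C := by
    rw [lintegral_mul_const' C _ hCtop,
      ← ofReal_integral_eq_lintegral_ofReal hintexp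
        (ae_of_all _ fun s => (Real.exp_pos _).le),
      hlaplace t lam1 ht.le hlam1.le]
  calc eLpNorm (fun x => (∫ s, P s f x ∂(ν t)) - m) 2 μ
      ≤ (∫⁻ x, (∫⁻ s, g (s, x) ∂(ν t)) ^ (2:ℝ) ∂μ) ^ (1/2:ℝ) := stepA
    _ ≤ ∫⁻ s, (∫⁻ x, g (s, x) ^ (2:ℝ) ∂μ) ^ (1/2:ℝ) ∂(ν t) := stepB
    _ ≤ ∫⁻ s, ENNReal.ofReal (Real.exp (-lam1 * s)) * C ∂(ν t) := stepC
    _ = ENNReal.ofReal (Real.exp (-t * B lam1)) * C := stepD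
end
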